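/- arXiv:2304.03042 — 4 statements merged into one kernel-verified Lean document; each statement's English description precedes it below -/
import Mathlib

section
/- Let T > 0, γ > 0 and N ∈ ℕ with N ≥ 1. Set Δ := T/N and t_i := i·Δ for i = 0,…,N. Then ∑_{i=0}^{N-1} ∫_{t_i}^{t_{i+1}} (t^γ − t_i^γ) dt ≤ T^γ · Δ. In particular, even though the local error t^γ − t_i^γ is only of order Δ^γ, the global (summed and integrated) error is of order Δ = T/N. -/
open MeasureTheory Real

lemma cont_rpow_aux (γ : ℝ) (hγ : 0 < γ) : Continuous fun t : ℝ => t ^ γ := by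
  rw [continuous_iff_continuousAt]
  intro x
  exact Real.continuousAt_rpow_const x γ (Or.inr hγ.le)

/-- For a uniform grid `t_i = i * (T/N)` on `[0,T]` with mesh `Δ = T/N`,
the summed and integrated local error `∑ᵢ ∫_{tᵢ}^{tᵢ₊₁} (t^γ - tᵢ^γ) dt` is bounded by
`T^γ * Δ`. -/
theorem sum_integral_rpow_sub_le (T γ : ℝ) (hT : 0 < T) (hγ : 0 < γ)
    (N : ℕ) (hN : 1 ≤ N) :
    ∑ i ∈ Finset.range N,
      ∫ t in ((i : ℝ) * (T / N))..(((i : ℝ) + 1) * (T / N)),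
        (t ^ γ - ((i : ℝ) * (T / N)) ^ γ)
      ≤ T ^ γ * (T / N) := by
  have hΔ : 0 < T / N := div_pos hT (by exact_mod_cast Nat.lt_of_lt_of_le Nat.zero_lt_one hN)
  set Δ := T / N with hΔdef
  have hcont := cont_rpow_aux γ hγ
  have key : ∀ i ∈ Finset.range N,
      (∫ t in ((i : ℝ) * Δ)..(((i : ℝ) + 1) * Δ), (t ^ γ - ((i : ℝ) * Δ) ^ γ))
        ≤ ((((i : ℕ) + 1 : ℕ) : ℝ) * Δ) ^ γ * Δ - ((i : ℝ) * Δ) ^ γ * Δ := by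
    intro i _
    have hle : (i : ℝ) * Δ ≤ ((i : ℝ) + 1) * Δ := by nlinarith
    have h1 : (∫ t in ((i : ℝ) * Δ)..(((i : ℝ) + 1) * Δ), (t ^ γ - ((i : ℝ) * Δ) ^ γ))
        ≤ ∫ _t in ((i : ℝ) * Δ)..(((i : ℝ) + 1) * Δ), ((((i : ℝ) + 1) * Δ) ^ γ - ((i : ℝ) * Δ) ^ γ) := by
      apply intervalIntegral.integral_mono_on hle
      · exact ((hcont.sub continuous_const).intervalIntegrable _ _)
      · exact intervalIntegrable_const
      · intro t ht
        have ht1 : t ≤ ((i : ℝ) + 1) * Δ := ht.2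
        have ht0 : 0 ≤ t := le_trans (by positivity) ht.1
        have := Real.rpow_le_rpow ht0 ht1 hγ.le
        linarith
    rw [intervalIntegral.integral_const, smul_eq_mul] at h1
    have : ((((i : ℕ) + 1 : ℕ) : ℝ)) = (i : ℝ) + 1 := by push_cast; ring
    rw [this]
    nlinarith [h1]
  calc ∑ i ∈ Finset.range N,
        (∫ t in ((i : ℝ) * Δ)..(((i : ℝ) + 1) * Δ), (t ^ γ - ((i : ℝ) * Δ) ^ γ))
      ≤ ∑ i ∈ Finset.range N, (((((i : ℕ) + 1 : ℕ) : ℝ) * Δ) ^ γ * Δ - ((i : ℝ) * Δ) ^ γ * Δ) :=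
        Finset.sum_le_sum key
    _ = ((N : ℝ) * Δ) ^ γ * Δ - (((0 : ℕ) : ℝ) * Δ) ^ γ * Δ :=
        Finset.sum_range_sub (fun n : ℕ => ((n : ℝ) * Δ) ^ γ * Δ) N
    _ ≤ T ^ γ * Δ := by
        have hNpos : (0 : ℝ) < N := by exact_mod_cast Nat.lt_of_lt_of_le Nat.zero_lt_one hN
        have hNT : (N : ℝ) * Δ = T := by rw [hΔdef]; field_simp [hΔdef]
        rw [hNT]
        push_cast
        rw [zero_mul, Real.zero_rpow hγ.ne']
        linarith
end

section
/- Let H ∈ (0,1/2) and 0 ≤ s ≤ t. Then ∫_0^t |K(t,r) − K(s,r)| dr = (s^{H+1/2} − t^{H+1/2} + 2(t−s)^{H+1/2})/(H+1/2), and consequently ∫_0^t |K(t,r) − K(s,r)| dr ≤ 2(t−s)^{H+1/2}/(H+1/2). -/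
open MeasureTheory Real

/-- The Riemann–Liouville kernel `K(t,s) = (t-s)^(H-1/2)` for `s < t`, and `0` for `s ≥ t`. -/
noncomputable def K (H t s : ℝ) : ℝ :=
  if s < t then (t - s) ^ (H - 1/2) else 0

/-- For `H ∈ (0,1/2)` and `0 ≤ s ≤ t`,
`∫₀ᵗ |K(t,r) - K(s,r)| dr = (s^(H+1/2) - t^(H+1/2) + 2 (t-s)^(H+1/2)) / (H+1/2)`, and
consequently `∫₀ᵗ |K(t,r) - K(s,r)| dr ≤ 2 (t-s)^(H+1/2) / (H+1/2)`. -/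
theorem integral_abs_kernel_sub_eq_and_le
    (H s t : ℝ) (hH : H ∈ Set.Ioo (0 : ℝ) (1/2)) (hs : 0 ≤ s) (hst : s ≤ t) :
    (∫ r in (0 : ℝ)..t, |K H t r - K H s r| =
      (s ^ (H + 1/2) - t ^ (H + 1/2) + 2 * (t - s) ^ (H + 1/2)) / (H + 1/2)) ∧
    (∫ r in (0 : ℝ)..t, |K H t r - K H s r| ≤
      2 * (t - s) ^ (H + 1/2) / (H + 1/2)) := by
  obtain ⟨hH0, hH1⟩ := hH
  set α := H - 1/2 with hα
  have hα1 : (-1 : ℝ) < α := by simp [hα]; linarith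
  have hα0 : α < 0 := by simp [hα]; linarith
  have hαne : α ≠ 0 := ne_of_lt hα0
  have hp : H + 1/2 = α + 1 := by ring
  have hp0 : (0:ℝ) < α + 1 := by linarith
  -- integrability of x ↦ x^α
  have hI : ∀ a b : ℝ, IntervalIntegrable (fun x : ℝ => x ^ α) volume a b :=
    fun a b => intervalIntegral.intervalIntegrable_rpow' hα1
  -- integral on [s,t]
  have congr2 : ∀ r ∈ Set.uIcc s t, |K H t r - K H s r| = (t - r) ^ α := by
    intro r hr
    rw [Set.uIcc_of_le hst] at hr
    have h1 : K H s r = 0 := by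
      rw [K, if_neg (not_lt.mpr hr.1)]
    have h2 : K H t r = (t - r) ^ α := by
      rcases lt_or_eq_of_le hr.2 with h | h
      · rw [K, if_pos h]
      · rw [K, if_neg (by simp [h]), h, sub_self, Real.zero_rpow hαne]
    rw [h1, h2, sub_zero, abs_of_nonneg (Real.rpow_nonneg (by linarith [hr.2]) _)]
  have int2 : ∫ r in s..t, |K H t r - K H s r| = (t - s) ^ (α + 1) / (α + 1) := by
    rw [intervalIntegral.integral_congr congr2]
    rw [show (∫ r in s..t, (t - r) ^ α) = ∫ x in (t - t)..(t - s), x ^ α from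
      intervalIntegral.integral_comp_sub_left (fun x => x ^ α) t]
    rw [sub_self, integral_rpow (Or.inl hα1), Real.zero_rpow (by positivity)]
    ring
  -- integral on [0,s]
  have congr1 : ∀ᵐ r ∂(volume : Measure ℝ), r ∈ Set.uIoc (0:ℝ) s →
      |K H t r - K H s r| = (s - r) ^ α - (t - r) ^ α := by
    have hne : ∀ᵐ r : ℝ ∂volume, r ≠ s := by
      refine ae_iff.mpr ?_
      simpa using measure_singleton (s : ℝ)
    filter_upwards [hne] with r hr hmem
    rw [Set.uIoc_of_le hs] at hmem
    have hrs : r < s := lt_of_le_of_ne hmem.2 hr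
    have h1 : K H s r = (s - r) ^ α := by rw [K, if_pos hrs]
    have h2 : K H t r = (t - r) ^ α := by rw [K, if_pos (lt_of_lt_of_le hrs hst)]
    have hle : (t - r) ^ α ≤ (s - r) ^ α :=
      Real.rpow_le_rpow_of_nonpos (by linarith) (by linarith) hα0.le
    rw [h1, h2, abs_of_nonpos (by linarith), neg_sub]
  have ints : IntervalIntegrable (fun r => (s - r) ^ α) volume 0 s := by
    have := ((hI 0 s).comp_sub_left s).symm
    simpa using this
  have intt : IntervalIntegrable (fun r => (t - r) ^ α) volume 0 s := by
    have := (hI (t - 0) (t - s)).comp_sub_left t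
    simpa [sub_sub_cancel] using this
  have int1 : ∫ r in (0:ℝ)..s, |K H t r - K H s r| =
      s ^ (α + 1) / (α + 1) - (t ^ (α + 1) - (t - s) ^ (α + 1)) / (α + 1) := by
    rw [intervalIntegral.integral_congr_ae congr1,
      intervalIntegral.integral_sub ints intt]
    rw [show (∫ r in (0:ℝ)..s, (s - r) ^ α) = ∫ x in (s - s)..(s - 0), x ^ α from
      intervalIntegral.integral_comp_sub_left (fun x => x ^ α) s]
    rw [show (∫ r in (0:ℝ)..s, (t - r) ^ α) = ∫ x in (t - s)..(t - 0), x ^ α from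
      intervalIntegral.integral_comp_sub_left (fun x => x ^ α) t]
    rw [sub_self, sub_zero, sub_zero, integral_rpow (Or.inl hα1),
      integral_rpow (Or.inl hα1), Real.zero_rpow (by positivity)]
    ring
  -- integrability of abs on pieces
  have habs1 : IntervalIntegrable (fun r => |K H t r - K H s r|) volume 0 s := by
    refine (ints.sub intt).congr_ae ?_
    rw [Filter.EventuallyEq, ae_restrict_iff' measurableSet_uIoc]
    filter_upwards [congr1] with r h hmem
    exact (h hmem).symm
  have habs2 : IntervalIntegrable (fun r => |K H t r - K H s r|) volume s t := by
    have base : IntervalIntegrable (fun r => (t - r) ^ α) volume s t := by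
      have := (hI (t - s) (t - t)).comp_sub_left t
      simpa [sub_sub_cancel] using this
    refine base.congr_ae ?_
    rw [Filter.EventuallyEq, ae_restrict_iff' measurableSet_uIoc]
    filter_upwards with r hmem
    exact (congr2 r (Set.uIoc_subset_uIcc hmem)).symm
  have split := intervalIntegral.integral_add_adjacent_intervals habs1 habs2
  have key : ∫ r in (0:ℝ)..t, |K H t r - K H s r| =
      (s ^ (H + 1/2) - t ^ (H + 1/2) + 2 * (t - s) ^ (H + 1/2)) / (H + 1/2) := by
    rw [← split, int1, int2, hp]
    ring
  refine ⟨key, key.trans_le ?_⟩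
  have hstp : s ^ (H + 1/2) ≤ t ^ (H + 1/2) :=
    Real.rpow_le_rpow hs hst (by linarith)
  rw [div_le_div_iff₀ (by linarith) (by linarith)]
  nlinarith [Real.rpow_nonneg (sub_nonneg.mpr hst) (H + 1/2)]
end

section
/- Let H ∈ (0,1/2), t > 0, n ≥ 1 and 1 ≤ k ≤ n. Let I_1,…,I_k be pairwise disjoint nonempty subsets of {1,…,n} whose union is {1,…,n}, set n_l := |I_l|, and for each l ∈ {1,…,k} fix an element m_l ∈ I_l. Then ∫_{[0,t]^n} ∏_{l=1}^k [ (t − s_{m_l})^{H−1/2} · ∏_{j ∈ I_l \ {m_l}} (t − s_j)^{H−1/2} (s_{m_l} − s_j)_+^{H−1/2} ] ds_1 … ds_n ≤ (2H)^{−(n−k)} · t^{2H(n−k) + k(H+1/2)} · ∏_{l=1}^k B(2H(n_l − 1) + 1, H + 1/2), where for x ∈ ℝ, x_+^{H−1/2} := x^{H−1/2} if x > 0 and 0 otherwise. -/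
open MeasureTheory Real Function Finset
open scoped ENNReal

/-- The Beta function `B(a,b) = ∫₀¹ u^(a-1) (1-u)^(b-1) du`. -/
noncomputable def Beta (a b : ℝ) : ℝ :=
  ∫ u in (0 : ℝ)..1, u ^ (a - 1) * (1 - u) ^ (b - 1)

/-- `x₊^e := x^e` if `x > 0` and `0` otherwise. -/
noncomputable def posRpow (x e : ℝ) : ℝ :=
  if 0 < x then x ^ e else 0

section Auxiliary

lemma posRpow_nonneg (x e : ℝ) : 0 ≤ posRpow x e := by
  unfold posRpow; split
  · exact Real.rpow_nonneg (le_of_lt ‹_›) _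
  · exact le_refl 0

lemma posRpow_of_nonpos {x : ℝ} (h : x ≤ 0) (e : ℝ) : posRpow x e = 0 := by
  unfold posRpow; rw [if_neg (not_lt.mpr h)]

lemma posRpow_of_pos {x : ℝ} (h : 0 < x) (e : ℝ) : posRpow x e = x ^ e := by
  unfold posRpow; rw [if_pos h]

lemma measurable_posRpow {α : Type*} [MeasurableSpace α] {f : α → ℝ} (hf : Measurable f) (c : ℝ) :
    Measurable fun x => posRpow (f x) c := by
  unfold posRpow
  exact Measurable.ite (measurableSet_lt measurable_const hf)
    ((show Measurable fun x : ℝ => x ^ c by fun_prop).comp hf) measurable_const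

lemma Beta_nonneg (a b : ℝ) : 0 ≤ Beta a b := by
  unfold Beta
  apply intervalIntegral.integral_nonneg (by norm_num)
  intro u hu
  exact mul_nonneg (Real.rpow_nonneg hu.1 _) (Real.rpow_nonneg (by linarith [hu.2]) _)

lemma beta_scale {a b t : ℝ} (ht : 0 < t) :
    ∫ y in (0:ℝ)..t, y ^ (a-1) * (t - y) ^ (b-1) = t ^ (a+b-1) * Beta a b := by
  have h1 := intervalIntegral.integral_comp_mul_left (a := (0:ℝ)) (b := (1:ℝ)) (c := t)
    (fun y => y ^ (a-1) * (t - y) ^ (b-1)) ht.ne'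
  simp only [mul_zero, mul_one] at h1
  have h2 : (∫ v in (0:ℝ)..1, (t*v) ^ (a-1) * (t - t*v) ^ (b-1))
      = t ^ (a + b - 2) * Beta a b := by
    rw [intervalIntegral.integral_congr (g := fun v : ℝ =>
      t ^ (a + b - 2) * (v ^ (a-1) * (1 - v) ^ (b-1)))]
    · rw [intervalIntegral.integral_const_mul]; rfl
    · intro v hv
      rw [Set.uIcc_of_le (by norm_num)] at hv
      have hv0 : 0 ≤ v := hv.1
      have hv1 : v ≤ 1 := hv.2
      dsimp only
      have hfac : t - t*v = t * (1 - v) := by ring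
      rw [hfac, Real.mul_rpow ht.le hv0, Real.mul_rpow ht.le (by linarith),
        show a + b - 2 = (a-1) + (b-1) by ring, Real.rpow_add ht]
      ring
  have h3 : (∫ y in (0:ℝ)..t, y ^ (a-1) * (t - y) ^ (b-1))
      = t * ∫ v in (0:ℝ)..1, (t*v) ^ (a-1) * (t - t*v) ^ (b-1) := by
    rw [h1, smul_eq_mul, ← mul_assoc, mul_inv_cancel₀ ht.ne', one_mul]
  rw [h3, h2, ← mul_assoc, show a+b-1 = 1+(a+b-2) by ring, Real.rpow_add ht, Real.rpow_one]

/-- Lemma A : the inner kernel integral bound. -/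
lemma lemA {H t : ℝ} (h0 : 0 < H) (h1 : H < 1/2) (ht : 0 < t) (u : ℝ) :
    ∫⁻ y, ENNReal.ofReal ((t - y) ^ (H - 1/2) * posRpow (u - y) (H - 1/2))
        ∂(volume.restrict (Set.Icc 0 t)) ≤
      ENNReal.ofReal ((max (min u t) 0) ^ (2*H) / (2*H)) := by
  by_cases hu : u ≤ 0
  · have h0' : (fun y => ENNReal.ofReal ((t - y) ^ (H - 1/2) * posRpow (u - y) (H - 1/2)))
        =ᵐ[volume.restrict (Set.Icc 0 t)] fun _ => 0 := by
      filter_upwards [ae_restrict_mem measurableSet_Icc] with y hy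
      rw [posRpow_of_nonpos (by linarith [hy.1]), mul_zero, ENNReal.ofReal_zero]
    rw [lintegral_congr_ae h0', lintegral_zero]
    exact bot_le
  · push_neg at hu
    set w := min u t with hw
    have hw0 : 0 < w := lt_min hu ht
    have hwt : w ≤ t := min_le_right _ _
    have hwu : w ≤ u := min_le_left _ _
    have hmax : max (min u t) 0 = w := max_eq_left hw0.le
    rw [hmax]
    set pb : ℝ → ℝ := fun y => posRpow (w - y) (2*H - 1) with hpbdef
    have hexp : (2:ℝ)*H - 1 ≠ 0 := by intro hh; linarith
    have h2H : (2:ℝ)*H ≠ 0 := by positivity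
    have hexp1 : (-1:ℝ) < 2*H - 1 := by linarith
    have hptle : ∀ y ∈ Set.Icc (0:ℝ) t,
        (t - y) ^ (H - 1/2) * posRpow (u - y) (H - 1/2) ≤ pb y := by
      intro y hy
      rcases le_or_gt u y with h | h
      · rw [posRpow_of_nonpos (by linarith), mul_zero]
        exact posRpow_nonneg _ _
      · rcases eq_or_lt_of_le hy.2 with heq | hyt
        · have hty : t - y = 0 := by rw [heq]; ring
          rw [hty, Real.zero_rpow (by intro hh; linarith), zero_mul]
          exact posRpow_nonneg _ _
        · have hwy : 0 < w - y := by
            have := lt_min h hyt; linarith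
          simp only [pb]
          rw [posRpow_of_pos (by linarith : (0:ℝ) < u - y), posRpow_of_pos hwy]
          have hle1 : (t - y) ^ (H - 1/2) ≤ (w - y) ^ (H - 1/2) :=
            Real.rpow_le_rpow_of_nonpos hwy (by linarith) (by linarith)
          have hle2 : (u - y) ^ (H - 1/2) ≤ (w - y) ^ (H - 1/2) :=
            Real.rpow_le_rpow_of_nonpos hwy (by linarith) (by linarith)
          calc (t - y) ^ (H - 1/2) * (u - y) ^ (H - 1/2)
              ≤ (w - y) ^ (H - 1/2) * (w - y) ^ (H - 1/2) :=
                mul_le_mul hle1 hle2 (Real.rpow_nonneg (by linarith) _)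
                  (Real.rpow_nonneg hwy.le _)
            _ = (w - y) ^ (2*H - 1) := by
                rw [← Real.rpow_add hwy]; ring_nf
    have hIw : IntegrableOn (fun y => (w - y)^(2*H-1)) (Set.Ioc 0 w) := by
      have h := (intervalIntegral.intervalIntegrable_rpow' (a := 0) (b := w)
        hexp1).comp_sub_left w
      simp only [sub_zero, sub_self] at h
      rw [← intervalIntegrable_iff_integrableOn_Ioc_of_le hw0.le]
      exact h.symm
    have hEq1 : Set.EqOn (fun y => (w - y)^(2*H-1)) pb (Set.Ioc 0 w) := by
      intro y hy
      rcases eq_or_lt_of_le hy.2 with heq | hlt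
      · simp only [pb, heq, sub_self, posRpow_of_nonpos le_rfl,
          Real.zero_rpow hexp]
      · simp only [pb, posRpow_of_pos (by linarith : (0:ℝ) < w - y)]
    have hEq2 : Set.EqOn (fun _ => (0:ℝ)) pb (Set.Ioc w t) := by
      intro y hy
      simp only [pb, posRpow_of_nonpos (by linarith [hy.1] : w - y ≤ 0)]
    have hint1 : IntegrableOn pb (Set.Ioc 0 w) := hIw.congr_fun hEq1 measurableSet_Ioc
    have hint2 : IntegrableOn pb (Set.Ioc w t) :=
      (integrableOn_zero).congr_fun hEq2 measurableSet_Ioc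
    have hunion : Set.Ioc (0:ℝ) w ∪ Set.Ioc w t = Set.Ioc 0 t :=
      Set.Ioc_union_Ioc_eq_Ioc hw0.le hwt
    have hint : IntegrableOn pb (Set.Icc 0 t) := by
      rw [integrableOn_Icc_iff_integrableOn_Ioc, ← hunion]
      exact hint1.union hint2
    have hval : ∫ y in Set.Icc (0:ℝ) t, pb y = w ^ (2*H) / (2*H) := by
      rw [integral_Icc_eq_integral_Ioc, ← hunion,
        setIntegral_union (Set.Ioc_disjoint_Ioc_of_le le_rfl) measurableSet_Ioc hint1 hint2,
        setIntegral_congr_fun measurableSet_Ioc hEq2.symm, integral_zero, add_zero,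
        setIntegral_congr_fun measurableSet_Ioc hEq1.symm,
        ← intervalIntegral.integral_of_le hw0.le,
        intervalIntegral.integral_comp_sub_left (fun x => x ^ (2*H-1)) w]
      simp only [sub_self, sub_zero]
      rw [integral_rpow (Or.inl hexp1)]
      rw [Real.zero_rpow (by intro hh; exact h2H (by linarith))]
      ring_nf
    calc ∫⁻ y, ENNReal.ofReal ((t - y) ^ (H - 1/2) * posRpow (u - y) (H - 1/2))
            ∂(volume.restrict (Set.Icc 0 t))
        ≤ ∫⁻ y, ENNReal.ofReal (pb y) ∂(volume.restrict (Set.Icc 0 t)) := by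
          refine lintegral_mono_ae ?_
          filter_upwards [ae_restrict_mem measurableSet_Icc] with y hy
          exact ENNReal.ofReal_le_ofReal (hptle y hy)
      _ = ENNReal.ofReal (∫ y in Set.Icc (0:ℝ) t, pb y) :=
          (ofReal_integral_eq_lintegral_ofReal hint
            (ae_of_all _ fun y => posRpow_nonneg _ _)).symm
      _ = ENNReal.ofReal (w ^ (2*H) / (2*H)) := by rw [hval]

/-- Lemma B : the marked-coordinate integral bound. -/
lemma lemB {H t : ℝ} (h0 : 0 < H) (h1 : H < 1/2) (ht : 0 < t) (d : ℕ) :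
    ∫⁻ y, ENNReal.ofReal ((t - y) ^ (H - 1/2)) *
        (ENNReal.ofReal ((max (min y t) 0) ^ (2*H) / (2*H)))^d
        ∂(volume.restrict (Set.Icc 0 t)) ≤
      ENNReal.ofReal (t ^ (2*H*d + H + 1/2) / (2*H)^d * Beta (2*H*d+1) (H+1/2)) := by
  have h2H : (0:ℝ) < 2*H := by linarith
  set a : ℝ := 2*H*d + 1 with ha
  set b : ℝ := H + 1/2 with hb
  set q : ℝ → ℝ := fun y => y ^ (a-1) * (t - y) ^ (b-1) / (2*H)^d with hq
  have hcongr : (fun y => ENNReal.ofReal ((t - y) ^ (H - 1/2)) *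
        (ENNReal.ofReal ((max (min y t) 0) ^ (2*H) / (2*H)))^d)
      =ᵐ[volume.restrict (Set.Icc 0 t)] fun y => ENNReal.ofReal (q y) := by
    filter_upwards [ae_restrict_mem measurableSet_Icc] with y hy
    have hy0 : (0:ℝ) ≤ y := hy.1
    have hyt : y ≤ t := hy.2
    rw [min_eq_left hyt, max_eq_left hy0]
    rw [← ENNReal.ofReal_pow (div_nonneg (Real.rpow_nonneg hy0 _) h2H.le),
      ← ENNReal.ofReal_mul (Real.rpow_nonneg (by linarith : (0:ℝ) ≤ t - y) _)]
    congr 1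
    rw [div_pow, ← Real.rpow_natCast (y ^ (2*H)) d, ← Real.rpow_mul hy0]
    simp only [q]
    rw [show a - 1 = 2*H*d by rw [ha]; ring, show b - 1 = H - 1/2 by rw [hb]; ring]
    ring
  rw [lintegral_congr_ae hcongr]
  have hbase : IntervalIntegrable (fun y => y ^ (a-1) * (t - y) ^ (b-1)) volume 0 t := by
    have hg : IntervalIntegrable (fun y => t ^ (a-1) * (t - y) ^ (b-1)) volume 0 t := by
      have := (intervalIntegral.intervalIntegrable_rpow' (a := 0) (b := t)
        (by rw [hb]; linarith : (-1:ℝ) < b - 1)).comp_sub_left t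
      simp only [sub_zero, sub_self] at this
      exact (this.symm).const_mul _
    refine hg.mono_fun ?_ ?_
    · apply Measurable.aestronglyMeasurable
      fun_prop
    · rw [Set.uIoc_of_le ht.le]
      filter_upwards [ae_restrict_mem measurableSet_Ioc] with y hy
      have hy0 : (0:ℝ) < y := hy.1
      have hyt : y ≤ t := hy.2
      simp only [Real.norm_eq_abs]
      rw [abs_of_nonneg (mul_nonneg (Real.rpow_nonneg hy0.le _)
          (Real.rpow_nonneg (by linarith) _)),
        abs_of_nonneg (mul_nonneg (Real.rpow_nonneg ht.le _)
          (Real.rpow_nonneg (by linarith) _))]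
      exact mul_le_mul_of_nonneg_right
        (Real.rpow_le_rpow hy0.le hyt
          (show (0:ℝ) ≤ a - 1 by
            rw [ha]; have hd : (0:ℝ) ≤ 2*H*d := by positivity
            linarith))
        (Real.rpow_nonneg (by linarith) _)
  have hq_int : IntegrableOn q (Set.Icc 0 t) := by
    rw [← intervalIntegrable_iff_integrableOn_Icc_of_le ht.le]
    exact hbase.div_const _
  have hval : ∫ y in Set.Icc (0:ℝ) t, q y
      = t ^ (2*H*d + H + 1/2) / (2*H)^d * Beta a b := by
    rw [integral_Icc_eq_integral_Ioc, ← intervalIntegral.integral_of_le ht.le]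
    simp only [q]
    rw [intervalIntegral.integral_div, beta_scale ht]
    rw [show a + b - 1 = 2*H*d + H + 1/2 by rw [ha, hb]; ring]
    ring
  calc ∫⁻ y, ENNReal.ofReal (q y) ∂(volume.restrict (Set.Icc 0 t))
      = ENNReal.ofReal (∫ y in Set.Icc (0:ℝ) t, q y) := by
        refine (ofReal_integral_eq_lintegral_ofReal hq_int ?_).symm
        filter_upwards [ae_restrict_mem measurableSet_Icc] with y hy
        have hy0 : (0:ℝ) ≤ y := hy.1
        have hyt : y ≤ t := hy.2
        simp only [q]
        exact div_nonneg (mul_nonneg (Real.rpow_nonneg hy0 _)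
          (Real.rpow_nonneg (by linarith) _)) (by positivity)
    _ ≤ _ := by rw [hval]

/-- Generic induction: integrating out coordinates in `S` one at a time, replacing each
factor `f j` (which may depend on coordinate `j` and coordinates outside `S`) by
its bound `g j` (which does not depend on coordinates in `S`). -/
lemma aux_lmarginal_prod_le {ι : Type*} [DecidableEq ι]
    (μ : ι → Measure ℝ) [∀ i, SigmaFinite (μ i)]
    (S : Finset ι) (f g : ι → (ι → ℝ) → ℝ≥0∞) (R : (ι → ℝ) → ℝ≥0∞)
    (hf : ∀ j, Measurable (f j)) (hg : ∀ j, Measurable (g j))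
    (hfS : ∀ j ∈ S, ∀ (x : ι → ℝ) (i : ι) (y : ℝ), i ∈ S → i ≠ j →
      f j (update x i y) = f j x)
    (hgS : ∀ j ∈ S, ∀ (x : ι → ℝ) (i : ι) (y : ℝ), i ∈ S →
      g j (update x i y) = g j x)
    (hbound : ∀ j ∈ S, ∀ x : ι → ℝ, ∫⁻ y, f j (update x j y) ∂(μ j) ≤ g j x)
    (hR : Measurable R)
    (hRS : ∀ (x : ι → ℝ) (i : ι) (y : ℝ), i ∈ S → R (update x i y) = R x) :
    (∫⋯∫⁻_S, (fun x => R x * ∏ j ∈ S, f j x) ∂μ) ≤ fun x => R x * ∏ j ∈ S, g j x := by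
  induction S using Finset.induction generalizing R with
  | empty => simp
  | @insert i S hiS ih =>
    have hmeas : Measurable fun x => R x * ∏ j ∈ insert i S, f j x :=
      hR.mul (Finset.measurable_prod _ fun j _ => hf j)
    rw [MeasureTheory.lmarginal_insert' _ hmeas hiS]
    have step : (fun x => ∫⁻ y, (R (update x i y) * ∏ j ∈ insert i S, f j (update x i y)) ∂μ i)
        ≤ fun x => (R x * g i x) * ∏ j ∈ S, f j x := by
      intro x
      have hre : ∀ y : ℝ, R (update x i y) * ∏ j ∈ insert i S, f j (update x i y)
          = (R x * ∏ j ∈ S, f j x) * f i (update x i y) := by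
        intro y
        rw [Finset.prod_insert hiS, hRS x i y (mem_insert_self i S)]
        have h2 : ∀ j ∈ S, f j (update x i y) = f j x := fun j hj =>
          hfS j (mem_insert_of_mem hj) x i y (mem_insert_self i S)
            (fun h => hiS (h ▸ hj))
        rw [Finset.prod_congr rfl h2]; ring
      simp only [hre]
      rw [lintegral_const_mul _ (show Measurable fun y => f i (update x i y) from
        (hf i).comp (measurable_update x))]
      calc (R x * ∏ j ∈ S, f j x) * ∫⁻ y, f i (update x i y) ∂μ i
          ≤ (R x * ∏ j ∈ S, f j x) * g i x :=
            mul_le_mul_right (hbound i (mem_insert_self i S) x) _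
        _ = (R x * g i x) * ∏ j ∈ S, f j x := by ring
    refine le_trans (le_trans (lmarginal_mono step)
      (ih (fun x => R x * g i x)
        (fun j hj x i' y hi' hij => hfS j (mem_insert_of_mem hj) x i' y (mem_insert_of_mem hi') hij)
        (fun j hj x i' y hi' => hgS j (mem_insert_of_mem hj) x i' y (mem_insert_of_mem hi'))
        (fun j hj x => hbound j (mem_insert_of_mem hj) x)
        (hR.mul (hg i))
        (fun x i' y hi' => by
          rw [hRS x i' y (mem_insert_of_mem hi'),
            hgS i (mem_insert_self i S) x i' y (mem_insert_of_mem hi')]))) ?_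
    intro x
    simp only [Finset.prod_insert hiS]
    exact le_of_eq (by ring)

end Auxiliary

/-- Bound on the multiple integral of products of Riemann–Liouville
kernels associated with a partition `I₁, …, I_k` of `{1,…,n}` with marked points
`m_l ∈ I_l`:
`∫_{[0,t]ⁿ} ∏ₗ [(t-s_{mₗ})^(H-1/2) ∏_{j ∈ Iₗ∖{mₗ}} (t-sⱼ)^(H-1/2) (s_{mₗ}-sⱼ)₊^(H-1/2)] ds
  ≤ (2H)^{-(n-k)} t^(2H(n-k)+k(H+1/2)) ∏ₗ B(2H(n_l-1)+1, H+1/2)`. -/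
theorem integral_partition_kernel_prod_le
    (H t : ℝ) (hH : H ∈ Set.Ioo (0 : ℝ) (1/2)) (ht : 0 < t)
    (n k : ℕ) (hn : 1 ≤ n) (hk : 1 ≤ k) (hkn : k ≤ n)
    (I : Fin k → Finset (Fin n))
    (hdisj : ∀ l l' : Fin k, l ≠ l' → Disjoint (I l) (I l'))
    (hne : ∀ l : Fin k, (I l).Nonempty)
    (hcover : Finset.univ.biUnion I = (Finset.univ : Finset (Fin n)))
    (m : Fin k → Fin n) (hm : ∀ l : Fin k, m l ∈ I l) :
    ∫ s in Set.Icc (0 : Fin n → ℝ) (fun _ => t),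
      ∏ l : Fin k,
        ((t - s (m l)) ^ (H - 1/2) *
          ∏ j ∈ (I l).erase (m l),
            (t - s j) ^ (H - 1/2) * posRpow (s (m l) - s j) (H - 1/2)) ≤
      t ^ (2 * H * ((n : ℝ) - k) + k * (H + 1/2)) / (2 * H) ^ (n - k) *
        ∏ l : Fin k, Beta (2 * H * (((I l).card : ℝ) - 1) + 1) (H + 1/2) := by
  classical
  obtain ⟨h0, h1⟩ := hH
  have h2H : (0:ℝ) < 2*H := by linarith
  -- the measures
  set ν : Measure ℝ := volume.restrict (Set.Icc 0 t) with hν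
  set μ : Fin n → Measure ℝ := fun _ => ν with hμ
  have hmeq : (volume : Measure (Fin n → ℝ)).restrict (Set.Icc 0 (fun _ => t))
      = Measure.pi μ := by
    rw [← Set.pi_univ_Icc, volume_pi]
    refine (Measure.pi_eq fun s hs => ?_).symm
    rw [Measure.restrict_apply (MeasurableSet.univ_pi hs), ← Set.pi_inter_distrib,
      Measure.pi_pi]
    simp_rw [hμ, hν, Measure.restrict_apply (hs _)]
    simp
  -- the block function
  have hblk_ex : ∀ j : Fin n, ∃ l : Fin k, j ∈ I l := by
    intro j
    have hj : j ∈ Finset.univ.biUnion I := by rw [hcover]; exact Finset.mem_univ j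
    rcases Finset.mem_biUnion.mp hj with ⟨l, _, hl⟩
    exact ⟨l, hl⟩
  choose blk hblk using hblk_ex
  have hblk_eq : ∀ {j : Fin n} {l : Fin k}, j ∈ I l → blk j = l := by
    intro j l hj
    by_contra hne'
    exact (Finset.disjoint_left.mp (hdisj _ _ hne') (hblk j)) hj
  have hminj : Function.Injective m := by
    intro l l' h
    by_contra hne'
    exact (Finset.disjoint_left.mp (hdisj l l' hne') (hm l)) (h ▸ hm l')
  set M : Finset (Fin n) := Finset.image m Finset.univ with hM
  set J : Finset (Fin n) := Finset.univ.biUnion (fun l => (I l).erase (m l)) with hJ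
  have hmem_M : ∀ l, m l ∈ M := fun l => Finset.mem_image_of_mem m (Finset.mem_univ l)
  have hJ_spec : ∀ j ∈ J, j ∈ I (blk j) ∧ j ≠ m (blk j) := by
    intro j hj
    rcases Finset.mem_biUnion.mp hj with ⟨l0, _, hl0⟩
    have hbe : blk j = l0 := hblk_eq (Finset.mem_of_mem_erase hl0)
    exact ⟨hblk j, by rw [hbe]; exact Finset.ne_of_mem_erase hl0⟩
  have hdisjMJ : Disjoint M J := by
    rw [Finset.disjoint_left]
    rintro i hiM hiJ
    rcases Finset.mem_image.mp hiM with ⟨l, _, rfl⟩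
    obtain ⟨hi1, hi2⟩ := hJ_spec _ hiJ
    exact hi2 (congrArg m (hblk_eq (hm l)).symm ▸ rfl)
  have hunionMJ : M ∪ J = Finset.univ := by
    apply Finset.eq_univ_of_forall
    intro i
    by_cases hiM : i ∈ M
    · exact Finset.mem_union_left _ hiM
    · refine Finset.mem_union_right _ ?_
      refine Finset.mem_biUnion.mpr ⟨blk i, Finset.mem_univ _, ?_⟩
      refine Finset.mem_erase.mpr ⟨?_, hblk i⟩
      intro heq
      exact hiM (heq ▸ hmem_M (blk i))
  have hmblkJ : ∀ (j i : Fin n), i ∈ J → m (blk j) ≠ i := by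
    intro j i hiJ heq
    exact Finset.disjoint_left.mp hdisjMJ (heq ▸ hmem_M (blk j)) hiJ
  -- ENNReal-valued factors
  set A : Fin k → (Fin n → ℝ) → ℝ≥0∞ :=
    fun l s => ENNReal.ofReal ((t - s (m l)) ^ (H - 1/2)) with hA
  set B : Fin n → (Fin n → ℝ) → ℝ≥0∞ := fun j s =>
    ENNReal.ofReal ((t - s j) ^ (H - 1/2) * posRpow (s (m (blk j)) - s j) (H - 1/2)) with hB
  set C : ℝ → ℝ≥0∞ :=
    fun u => ENNReal.ofReal ((max (min u t) 0) ^ (2*H) / (2*H)) with hC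
  set R : (Fin n → ℝ) → ℝ≥0∞ := fun s => ∏ l, A l s with hR
  set G : (Fin n → ℝ) → ℝ≥0∞ := fun s => R s * ∏ j ∈ J, B j s with hG
  have hAmeas : ∀ l, Measurable (A l) := by
    intro l
    apply ENNReal.measurable_ofReal.comp
    fun_prop
  have hBmeas : ∀ j, Measurable (B j) := by
    intro j
    apply ENNReal.measurable_ofReal.comp
    apply Measurable.mul
    · fun_prop
    · exact measurable_posRpow (by fun_prop) _
  have hCmeas : Measurable C := by
    apply ENNReal.measurable_ofReal.comp
    fun_prop
  have hRmeas : Measurable R := Finset.measurable_prod _ fun l _ => hAmeas l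
  have hGmeas : Measurable G :=
    hRmeas.mul (Finset.measurable_prod _ fun j _ => hBmeas j)
  haveI hsf : ∀ i, SigmaFinite (μ i) := fun i => by
    simp only [hμ, hν]; infer_instance
  -- the real integrand
  set F : (Fin n → ℝ) → ℝ := fun s => ∏ l : Fin k,
      ((t - s (m l)) ^ (H - 1/2) *
        ∏ j ∈ (I l).erase (m l),
          (t - s j) ^ (H - 1/2) * posRpow (s (m l) - s j) (H - 1/2)) with hF
  have hFmeas : Measurable F := by
    apply Finset.measurable_prod
    intro l _
    apply Measurable.mul
    · fun_prop
    · apply Finset.measurable_prod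
      intro j _
      exact Measurable.mul (by fun_prop) (measurable_posRpow (by fun_prop) _)
  -- a.e. membership
  have hae_mem : ∀ᵐ s ∂(Measure.pi μ), ∀ i, s i ∈ Set.Icc (0:ℝ) t := by
    rw [← hmeq]
    filter_upwards [ae_restrict_mem measurableSet_Icc] with s hs i
    exact ⟨hs.1 i, hs.2 i⟩
  have hnn : 0 ≤ᵐ[Measure.pi μ] F := by
    filter_upwards [hae_mem] with s hs
    apply Finset.prod_nonneg
    intro l _
    apply mul_nonneg (Real.rpow_nonneg (by linarith [(hs (m l)).2]) _)
    apply Finset.prod_nonneg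
    intro j _
    exact mul_nonneg (Real.rpow_nonneg (by linarith [(hs j).2]) _) (posRpow_nonneg _ _)
  -- pairwise disjointness of the erased blocks
  have hpd : Set.PairwiseDisjoint (↑(Finset.univ : Finset (Fin k)))
      (fun l => (I l).erase (m l)) := by
    intro l _ l' _ hll'
    exact Finset.disjoint_of_subset_left (Finset.erase_subset _ _)
      (Finset.disjoint_of_subset_right (Finset.erase_subset _ _) (hdisj l l' hll'))
  -- a.e. factorization
  have hcongr : (fun s => ENNReal.ofReal (F s)) =ᵐ[Measure.pi μ] G := by
    filter_upwards [hae_mem] with s hs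
    have hterm : ∀ l : Fin k, ∀ j ∈ (I l).erase (m l),
        ENNReal.ofReal ((t - s j) ^ (H - 1/2) * posRpow (s (m l) - s j) (H - 1/2))
          = B j s := by
      intro l j hj
      simp only [hB]
      rw [hblk_eq (Finset.mem_of_mem_erase hj)]
    calc ENNReal.ofReal (F s)
        = ∏ l, ENNReal.ofReal ((t - s (m l)) ^ (H - 1/2) *
            ∏ j ∈ (I l).erase (m l),
              ((t - s j) ^ (H - 1/2) * posRpow (s (m l) - s j) (H - 1/2))) := by
          rw [hF]
          exact ENNReal.ofReal_prod_of_nonneg (fun l _ => mul_nonneg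
            (Real.rpow_nonneg (by linarith [(hs (m l)).2]) _)
            (Finset.prod_nonneg fun j _ => mul_nonneg
              (Real.rpow_nonneg (by linarith [(hs j).2]) _) (posRpow_nonneg _ _)))
      _ = ∏ l, (A l s * ∏ j ∈ (I l).erase (m l), B j s) := by
          refine Finset.prod_congr rfl fun l _ => ?_
          rw [ENNReal.ofReal_mul (Real.rpow_nonneg (by linarith [(hs (m l)).2]) _),
            ENNReal.ofReal_prod_of_nonneg (fun j _ => mul_nonneg
              (Real.rpow_nonneg (by linarith [(hs j).2]) _) (posRpow_nonneg _ _))]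
          exact congrArg _ (Finset.prod_congr rfl (hterm l))
      _ = R s * ∏ j ∈ J, B j s := by
          rw [Finset.prod_mul_distrib, hR, hJ, Finset.prod_biUnion hpd]
      _ = G s := rfl
  -- step (i): integrate out the unmarked coordinates
  have hmJ : ∀ (l : Fin k) (i : Fin n), i ∈ J → m l ≠ i := by
    intro l i hiJ heq
    exact Finset.disjoint_left.mp hdisjMJ (heq ▸ hmem_M l) hiJ
  have haux1 : (∫⋯∫⁻_J, G ∂μ) ≤ fun s => R s * ∏ j ∈ J, C (s (m (blk j))) := by
    rw [hG]
    refine aux_lmarginal_prod_le μ J B (fun j s => C (s (m (blk j)))) R hBmeas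
      (fun j => hCmeas.comp (measurable_pi_apply _)) ?_ ?_ ?_ hRmeas ?_
    · intro j _ x i y hiJ hij
      simp only [hB]
      rw [Function.update_of_ne (Ne.symm hij), Function.update_of_ne (hmJ (blk j) i hiJ)]
    · intro j _ x i y hiJ
      rw [Function.update_of_ne (hmJ (blk j) i hiJ)]
    · intro j hj x
      obtain ⟨hjI, hjm⟩ := hJ_spec j hj
      simp only [hB, hC]
      have hu1 : ∀ y : ℝ, update x j y j = y := fun y => Function.update_self j y x
      have hu2 : ∀ y : ℝ, update x j y (m (blk j)) = x (m (blk j)) := fun y =>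
        Function.update_of_ne (Ne.symm hjm) _ _
      simp only [hu1, hu2]
      exact lemA h0 h1 ht _
    · intro x i y hiJ
      simp only [hR, hA]
      exact Finset.prod_congr rfl fun l _ => by
        rw [Function.update_of_ne (hmJ l i hiJ)]
  -- step (ii) data
  set f2 : Fin n → (Fin n → ℝ) → ℝ≥0∞ := fun i s =>
    ENNReal.ofReal ((t - s i) ^ (H - 1/2)) * (C (s i)) ^ ((I (blk i)).card - 1) with hf2
  set D : Fin k → ℝ≥0∞ := fun l =>
    ENNReal.ofReal (t ^ (2*H*((I l).card - 1 : ℕ) + H + 1/2) / (2*H)^((I l).card - 1)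
      * Beta (2*H*((I l).card - 1 : ℕ)+1) (H+1/2)) with hD
  have hf2meas : ∀ i, Measurable (f2 i) := by
    intro i
    refine Measurable.mul (f := fun s : Fin n → ℝ => ENNReal.ofReal ((t - s i) ^ (H - 1/2)))
      (g := fun s : Fin n → ℝ => (C (s i)) ^ ((I (blk i)).card - 1)) ?_ ?_
    · exact ENNReal.measurable_ofReal.comp (by fun_prop)
    · exact (hCmeas.comp (measurable_pi_apply i)).pow_const _
  have hG2eq : (fun s => R s * ∏ j ∈ J, C (s (m (blk j))))
      = fun s => (1:ℝ≥0∞) * ∏ i ∈ M, f2 i s := by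
    funext s
    rw [one_mul]
    have hJprod : ∏ j ∈ J, C (s (m (blk j))) = ∏ l, C (s (m l)) ^ ((I l).card - 1) := by
      rw [hJ, Finset.prod_biUnion hpd]
      refine Finset.prod_congr rfl fun l _ => ?_
      rw [Finset.prod_congr rfl
        (fun j hj => by rw [hblk_eq (Finset.mem_of_mem_erase hj)]),
        Finset.prod_const, Finset.card_erase_of_mem (hm l)]
    calc R s * ∏ j ∈ J, C (s (m (blk j)))
        = ∏ l, (A l s * C (s (m l)) ^ ((I l).card - 1)) := by
          rw [hJprod, hR, Finset.prod_mul_distrib]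
      _ = ∏ i ∈ M, f2 i s := by
          simp only [hM]
          rw [Finset.prod_image (fun a _ b _ h => hminj h)]
          refine Finset.prod_congr rfl fun l _ => ?_
          simp only [hf2, hA]
          rw [hblk_eq (hm l)]
  have haux2 : (∫⋯∫⁻_M, (fun s => (1:ℝ≥0∞) * ∏ i ∈ M, f2 i s) ∂μ)
      ≤ fun _ => (1:ℝ≥0∞) * ∏ i ∈ M, D (blk i) := by
    refine aux_lmarginal_prod_le μ M f2 (fun i _ => D (blk i)) (fun _ => 1) hf2meas
      (fun i => measurable_const) ?_ ?_ ?_ measurable_const ?_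
    · intro j _ x i y _ hij
      simp only [hf2, Function.update_of_ne (Ne.symm hij)]
    · intro j _ x i y _
      rfl
    · intro i _ x
      simp only [hf2, Function.update_self]
      exact lemB h0 h1 ht _
    · intro x i y _
      rfl
  have hMD : ∏ i ∈ M, D (blk i) = ∏ l, D l := by
    simp only [hM]
    rw [Finset.prod_image (fun a _ b _ h => hminj h)]
    exact Finset.prod_congr rfl fun l _ => by rw [hblk_eq (hm l)]
  -- cardinality bookkeeping
  have hcard1 : ∀ l, 1 ≤ (I l).card := fun l => Finset.card_pos.mpr (hne l)
  have hsumcard : ∑ l, (I l).card = n := by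
    have h := Finset.card_biUnion (s := (Finset.univ : Finset (Fin k))) (t := I)
      (fun l _ l' _ h => hdisj l l' h)
    rw [hcover, Finset.card_univ, Fintype.card_fin] at h
    exact h.symm
  have hsumd : ∑ l, ((I l).card - 1) = n - k := by
    have h2 : ∑ l, (((I l).card - 1) + 1) = ∑ l, (I l).card :=
      Finset.sum_congr rfl fun l _ => Nat.sub_add_cancel (hcard1 l)
    rw [Finset.sum_add_distrib, Finset.sum_const, Finset.card_univ, Fintype.card_fin,
      smul_eq_mul, mul_one, hsumcard] at h2
    omega
  -- final algebraic identity
  have hDprod : ∏ l, D l = ENNReal.ofReal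
      (t ^ (2 * H * ((n : ℝ) - k) + k * (H + 1/2)) / (2 * H) ^ (n - k) *
        ∏ l : Fin k, Beta (2 * H * (((I l).card : ℝ) - 1) + 1) (H + 1/2)) := by
    simp only [hD]
    rw [← ENNReal.ofReal_prod_of_nonneg (fun l _ => mul_nonneg
      (div_nonneg (Real.rpow_nonneg ht.le _) (by positivity)) (Beta_nonneg _ _))]
    congr 1
    rw [Finset.prod_mul_distrib, Finset.prod_div_distrib,
      Finset.prod_pow_eq_pow_sum, hsumd,
      ← Real.rpow_sum_of_pos ht (fun l => 2*H*(((I l).card - 1 : ℕ) : ℝ) + H + 1/2)]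
    have hexp : ∑ l, (2*H*(((I l).card - 1 : ℕ) : ℝ) + H + 1/2)
        = 2 * H * ((n : ℝ) - k) + k * (H + 1/2) := by
      have hc : ∑ l, (((I l).card - 1 : ℕ) : ℝ) = ((n - k : ℕ) : ℝ) := by
        rw [← hsumd]; push_cast; ring
      rw [show (fun l : Fin k => 2*H*(((I l).card - 1 : ℕ) : ℝ) + H + 1/2)
          = fun l : Fin k => 2*H*(((I l).card - 1 : ℕ) : ℝ) + (H + 1/2) by
            funext l; ring]
      rw [Finset.sum_add_distrib, Finset.sum_const, Finset.card_univ, Fintype.card_fin,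
        ← Finset.mul_sum, hc, Nat.cast_sub hkn, nsmul_eq_mul]
    rw [hexp]
    congr 1
    refine Finset.prod_congr rfl fun l _ => ?_
    rw [Nat.cast_sub (hcard1 l), Nat.cast_one]
  have hRHS_nonneg : 0 ≤ t ^ (2 * H * ((n : ℝ) - k) + k * (H + 1/2)) / (2 * H) ^ (n - k) *
      ∏ l : Fin k, Beta (2 * H * (((I l).card : ℝ) - 1) + 1) (H + 1/2) :=
    mul_nonneg (div_nonneg (Real.rpow_nonneg ht.le _) (by positivity))
      (Finset.prod_nonneg fun l _ => Beta_nonneg _ _)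
  -- reduce the Bochner integral to a lintegral
  rw [show (volume : Measure (Fin n → ℝ)).restrict (Set.Icc 0 (fun _ => t))
      = Measure.pi μ from hmeq]
  rw [integral_eq_lintegral_of_nonneg_ae hnn hFmeas.aestronglyMeasurable]
  refine ENNReal.toReal_le_of_le_ofReal hRHS_nonneg ?_
  rw [lintegral_congr_ae hcongr]
  set x₀ : Fin n → ℝ := fun _ => 0 with hx₀
  calc ∫⁻ s, G s ∂Measure.pi μ
      = (∫⋯∫⁻_Finset.univ, G ∂μ) x₀ := lintegral_eq_lmarginal_univ x₀
    _ = (∫⋯∫⁻_M, (∫⋯∫⁻_J, G ∂μ) ∂μ) x₀ := by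
        rw [← hunionMJ, lmarginal_union μ G hGmeas hdisjMJ]
    _ ≤ (∫⋯∫⁻_M, (fun s => R s * ∏ j ∈ J, C (s (m (blk j)))) ∂μ) x₀ :=
        lmarginal_mono haux1 x₀
    _ = (∫⋯∫⁻_M, (fun s => (1:ℝ≥0∞) * ∏ i ∈ M, f2 i s) ∂μ) x₀ := by rw [hG2eq]
    _ ≤ (1:ℝ≥0∞) * ∏ i ∈ M, D (blk i) := haux2 x₀
    _ = ∏ l, D l := by rw [one_mul, hMD]
    _ ≤ _ := le_of_eq hDprod
end

section
/- For every C > 0, the double series ∑_{n=1}^∞ ∑_{k=1}^n (C^n / n!) · (4(k+3))^{(k+3)/2} · S(n,k) is finite, where S(n,k) := (1/k!) ∑_{j=0}^k (−1)^j · binom(k,j) · (k−j)^n denotes the Stirling number of the second kind (the number of partitions of an n-element set into k nonempty blocks, in particular S(n,k) ≥ 0). -/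
open Real

/-- Stirling numbers of the second kind, via the explicit alternating-sum formula
`S(n,k) = (1/k!) ∑_{j=0}^k (-1)^j (k choose j) (k-j)^n`. -/
noncomputable def stirlingSecond (n k : ℕ) : ℝ :=
  (1 / (k.factorial : ℝ)) *
    ∑ j ∈ Finset.range (k + 1), (-1 : ℝ) ^ j * (Nat.choose k j : ℝ) * ((k : ℝ) - j) ^ n

/-- the rpow weight -/
noncomputable def chaosWgt (k : ℕ) : ℝ := (4 * ((k : ℝ) + 3)) ^ (((k : ℝ) + 3) / 2)

lemma chaosWgt_nonneg (k : ℕ) : 0 ≤ chaosWgt k :=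
  Real.rpow_nonneg (by positivity) _

lemma chaosWgt_succ_le (k : ℕ) :
    chaosWgt (k + 1) ≤ 4 * Real.sqrt ((k : ℝ) + 4) * chaosWgt k := by
  have hk3 : (0:ℝ) < (k:ℝ) + 3 := by positivity
  have hk4 : (0:ℝ) < (k:ℝ) + 4 := by positivity
  have hcast : ((k + 1 : ℕ) : ℝ) = (k : ℝ) + 1 := by push_cast; ring
  have hbase : (4 : ℝ) * (((k + 1 : ℕ) : ℝ) + 3) = 4 * ((k:ℝ) + 4) := by
    rw [hcast]; ring
  have hexp : (((k + 1 : ℕ) : ℝ) + 3) / 2 = 1/2 + ((k:ℝ) + 3)/2 := by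
    rw [hcast]; ring
  have hsplit : chaosWgt (k+1)
      = (4 * ((k:ℝ) + 4)) ^ ((1:ℝ)/2) * (4 * ((k:ℝ) + 4)) ^ (((k:ℝ)+3)/2) := by
    rw [chaosWgt, hbase, hexp, Real.rpow_add (by positivity)]
  have h1 : (4 * ((k:ℝ) + 4)) ^ ((1:ℝ)/2) = 2 * Real.sqrt ((k:ℝ) + 4) := by
    rw [← Real.sqrt_eq_rpow, Real.sqrt_mul (by norm_num : (0:ℝ) ≤ 4)]
    have h4 : Real.sqrt 4 = 2 := by
      rw [show (4:ℝ) = 2^2 by norm_num]; exact Real.sqrt_sq (by norm_num)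
    rw [h4]
  -- bound the second factor
  set r : ℝ := ((k:ℝ) + 4) / ((k:ℝ) + 3) with hr
  have hrpos : 0 < r := by positivity
  have hfac : (4:ℝ) * ((k:ℝ) + 4) = (4 * ((k:ℝ) + 3)) * r := by
    rw [hr]; field_simp
  have hlogr : Real.log r ≤ 1 / ((k:ℝ) + 3) := by
    have := Real.log_le_sub_one_of_pos hrpos
    have : Real.log r ≤ r - 1 := this
    have hr1 : r - 1 = 1 / ((k:ℝ) + 3) := by rw [hr]; field_simp; norm_num
    linarith [hr1 ▸ this]
  have hrp : r ^ (((k:ℝ)+3)/2) ≤ 2 := by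
    rw [Real.rpow_def_of_pos hrpos]
    have h2 : Real.log r * (((k:ℝ)+3)/2) ≤ 1/2 := by
      have hp : (0:ℝ) ≤ ((k:ℝ)+3)/2 := by positivity
      calc Real.log r * (((k:ℝ)+3)/2) ≤ (1/((k:ℝ)+3)) * (((k:ℝ)+3)/2) := by
            apply mul_le_mul_of_nonneg_right hlogr hp
        _ = 1/2 := by field_simp
    calc Real.exp (Real.log r * (((k:ℝ)+3)/2)) ≤ Real.exp (1/2) :=
          Real.exp_le_exp.mpr h2
      _ ≤ 2 := by
          have : (1:ℝ)/2 ≤ Real.log 2 := by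
            have := Real.log_two_gt_d9; linarith
          calc Real.exp (1/2) ≤ Real.exp (Real.log 2) := Real.exp_le_exp.mpr this
            _ = 2 := Real.exp_log (by norm_num)
  have h2 : (4 * ((k:ℝ) + 4)) ^ (((k:ℝ)+3)/2) ≤ 2 * chaosWgt k := by
    rw [hfac, Real.mul_rpow (by positivity) (le_of_lt hrpos)]
    rw [chaosWgt, mul_comm]
    exact mul_le_mul_of_nonneg_right hrp (Real.rpow_nonneg (by positivity) _)
  calc chaosWgt (k+1) = (2 * Real.sqrt ((k:ℝ) + 4)) * (4 * ((k:ℝ) + 4)) ^ (((k:ℝ)+3)/2) := by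
        rw [hsplit, h1]
    _ ≤ (2 * Real.sqrt ((k:ℝ) + 4)) * (2 * chaosWgt k) := by
        apply mul_le_mul_of_nonneg_left h2 (by positivity)
    _ = 4 * Real.sqrt ((k : ℝ) + 4) * chaosWgt k := by ring

/-- the dominating one-variable sequence -/
noncomputable def chaosDom (C : ℝ) (k : ℕ) : ℝ :=
  Real.exp (C * k) * (chaosWgt k * 2 ^ k / (k.factorial : ℝ))

lemma chaosDom_nonneg (C : ℝ) (k : ℕ) : 0 ≤ chaosDom C k := by
  have := chaosWgt_nonneg k
  unfold chaosDom; positivity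

lemma summable_chaosDom (C : ℝ) : Summable (chaosDom C) := by
  apply summable_of_ratio_norm_eventually_le (r := 1/2) (by norm_num)
  have hD : (0:ℝ) < 16 * Real.exp C := by positivity
  filter_upwards [Filter.eventually_ge_atTop (⌈(16 * Real.exp C)^2⌉₊ + 7)] with k hk
  have hkD : ((16 * Real.exp C)^2 : ℝ) + 7 ≤ (k:ℝ) := by
    have h1 : ((16 * Real.exp C)^2 : ℝ) ≤ (⌈(16 * Real.exp C)^2⌉₊ : ℝ) := Nat.le_ceil _
    have h2 : ((⌈(16 * Real.exp C)^2⌉₊ + 7 : ℕ) : ℝ) ≤ (k:ℝ) := by exact_mod_cast hk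
    push_cast at h2; linarith
  have hsq : 16 * Real.exp C * Real.sqrt ((k:ℝ) + 4) ≤ (k:ℝ) + 1 := by
    have h0 : (0:ℝ) ≤ (k:ℝ) + 4 := by positivity
    have key : (16 * Real.exp C)^2 * ((k:ℝ) + 4) ≤ ((k:ℝ) + 1)^2 := by
      nlinarith [hkD, sq_nonneg ((k:ℝ) - 7), hD.le]
    have hs := Real.sqrt_le_sqrt key
    rw [Real.sqrt_mul (sq_nonneg _), Real.sqrt_sq hD.le, Real.sqrt_sq (by positivity)] at hs
    exact hs
  -- now the ratio inequality
  set s := Real.sqrt ((k:ℝ) + 4) with hs_def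
  have hspos : 0 < s := Real.sqrt_pos.mpr (by positivity)
  set W := chaosWgt k with hW_def
  have hWnn : 0 ≤ W := chaosWgt_nonneg k
  set E := Real.exp (C * k) with hE_def
  have hEpos : 0 < E := Real.exp_pos _
  have hFpos : (0:ℝ) < (k.factorial : ℝ) := by exact_mod_cast k.factorial_pos
  have hw := chaosWgt_succ_le k
  have expand : chaosDom C (k+1)
      = E * Real.exp C * (chaosWgt (k+1) * (2 * 2 ^ k) / ((((k:ℝ)+1)) * (k.factorial : ℝ))) := by
    unfold chaosDom
    rw [← Real.exp_add]
    have h1 : C * ((k:ℕ)+1 : ℕ) = C * k + C := by push_cast; ring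
    have h2 : ((k+1).factorial : ℝ) = ((k:ℝ)+1) * (k.factorial : ℝ) := by
      rw [Nat.factorial_succ]; push_cast; ring
    rw [h1, h2, pow_succ]
    ring
  have step1 : chaosDom C (k+1)
      ≤ E * Real.exp C * ((4 * s * W) * (2 * 2 ^ k) / ((((k:ℝ)+1)) * (k.factorial : ℝ))) := by
    rw [expand]; gcongr
  have step2 : E * Real.exp C * ((4 * s * W) * (2 * 2 ^ k) / ((((k:ℝ)+1)) * (k.factorial : ℝ)))
      = (8 * Real.exp C * s / ((k:ℝ)+1)) * (E * (W * 2 ^ k / (k.factorial : ℝ))) := by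
    field_simp; ring
  have step3 : 8 * Real.exp C * s / ((k:ℝ)+1) ≤ 1/2 := by
    rw [div_le_iff₀ (by positivity)]
    nlinarith [hsq]
  have final : chaosDom C (k+1) ≤ 1/2 * chaosDom C k := by
    calc chaosDom C (k+1)
        ≤ (8 * Real.exp C * s / ((k:ℝ)+1)) * (E * (W * 2 ^ k / (k.factorial : ℝ))) := by
          rw [← step2]; exact step1
      _ ≤ 1/2 * (E * (W * 2 ^ k / (k.factorial : ℝ))) := by
          apply mul_le_mul_of_nonneg_right step3
          positivity
      _ = 1/2 * chaosDom C k := rfl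
  rw [Real.norm_of_nonneg (chaosDom_nonneg C _), Real.norm_of_nonneg (chaosDom_nonneg C _)]
  exact final

lemma abs_stirlingSecond_le (n k : ℕ) :
    |stirlingSecond n k| ≤ 2 ^ k * (k : ℝ) ^ n / (k.factorial : ℝ) := by
  have hF : (0:ℝ) < (k.factorial : ℝ) := by exact_mod_cast k.factorial_pos
  unfold stirlingSecond
  rw [abs_mul, abs_of_nonneg (by positivity : (0:ℝ) ≤ 1 / (k.factorial : ℝ))]
  have hsum : |∑ j ∈ Finset.range (k + 1),
      (-1 : ℝ) ^ j * (Nat.choose k j : ℝ) * ((k : ℝ) - j) ^ n|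
      ≤ ∑ j ∈ Finset.range (k + 1), (Nat.choose k j : ℝ) * (k : ℝ) ^ n := by
    refine (Finset.abs_sum_le_sum_abs _ _).trans (Finset.sum_le_sum ?_)
    intro j hj
    have hjk : (j : ℝ) ≤ (k : ℝ) := by
      exact_mod_cast Nat.lt_succ_iff.mp (Finset.mem_range.mp hj)
    rw [abs_mul, abs_mul, abs_pow, abs_neg, abs_one, one_pow, one_mul,
      abs_of_nonneg (by positivity : (0:ℝ) ≤ (Nat.choose k j : ℝ)), abs_pow]
    apply mul_le_mul_of_nonneg_left _ (by positivity)
    apply pow_le_pow_left₀ (abs_nonneg _)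
    rw [abs_of_nonneg (by linarith : (0:ℝ) ≤ (k:ℝ) - j)]
    linarith
  have h2 : ∑ j ∈ Finset.range (k + 1), (Nat.choose k j : ℝ) * (k : ℝ) ^ n
      = 2 ^ k * (k : ℝ) ^ n := by
    rw [← Finset.sum_mul]
    congr 1
    exact_mod_cast Nat.sum_range_choose k
  calc 1 / (k.factorial : ℝ) * |∑ j ∈ Finset.range (k + 1),
        (-1 : ℝ) ^ j * (Nat.choose k j : ℝ) * ((k : ℝ) - j) ^ n|
      ≤ 1 / (k.factorial : ℝ) * (2 ^ k * (k : ℝ) ^ n) := by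
        apply mul_le_mul_of_nonneg_left _ (by positivity)
        rw [← h2]; exact hsum
    _ = 2 ^ k * (k : ℝ) ^ n / (k.factorial : ℝ) := by ring

set_option maxHeartbeats 1000000 in
/-- For every `C > 0`, the double series
`∑_{n≥1} ∑_{k=1}^n (Cⁿ/n!) (4(k+3))^((k+3)/2) S(n,k)` is finite. -/
theorem summable_chaos_expansion_series (C : ℝ) (hC : 0 < C) :
    Summable (fun n : ℕ =>
      ∑ k ∈ Finset.Icc 1 n,
        (C ^ n / (n.factorial : ℝ)) * (4 * ((k : ℝ) + 3)) ^ (((k : ℝ) + 3) / 2) *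
          stirlingSecond n k) := by
  set A : ℕ → ℕ → ℝ := fun n k =>
    (C * k) ^ n / (n.factorial : ℝ) * (chaosWgt k * 2 ^ k / (k.factorial : ℝ)) with hA
  have hAnn : ∀ n k, 0 ≤ A n k := by
    intro n k
    have := chaosWgt_nonneg k
    have h1 : (0:ℝ) ≤ (C * k) ^ n := by positivity
    positivity
  -- G with coordinates (k, n)
  set G : ℕ × ℕ → ℝ := fun p => if p.1 ∈ Finset.Icc 1 p.2 then A p.2 p.1 else 0 with hG
  have hG0 : (0 : ℕ × ℕ → ℝ) ≤ G := by
    intro p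
    simp only [hG, Pi.zero_apply]
    split_ifs
    · exact hAnn _ _
    · exact le_rfl
  have hGle : ∀ p : ℕ × ℕ, G p ≤ A p.2 p.1 := by
    intro p
    simp only [hG]
    split_ifs
    · exact le_rfl
    · exact hAnn _ _
  have hsec : ∀ k, Summable fun n => G (k, n) := by
    intro k
    apply Summable.of_nonneg_of_le (fun n => hG0 (k, n)) (fun n => hGle (k, n))
    have h := (Real.summable_pow_div_factorial (C * (k:ℝ))).mul_right
      (chaosWgt k * 2 ^ k / (k.factorial : ℝ))
    exact h
  have hAsum : ∀ k, Summable fun n => A n k := fun k =>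
    (Real.summable_pow_div_factorial (C * k)).mul_right _
  have htsumA : ∀ k : ℕ, ∑' n, A n k = chaosDom C k := by
    intro k
    have hexp : ∑' n : ℕ, (C * k) ^ n / (n.factorial : ℝ) = Real.exp (C * k) := by
      rw [Real.exp_eq_exp_ℝ, NormedSpace.exp_eq_tsum_div]
    simp only [hA]
    rw [tsum_mul_right, hexp]
    rfl
  have htsum : ∀ k, ∑' n, G (k, n) ≤ chaosDom C k := by
    intro k
    calc ∑' n, G (k, n) ≤ ∑' n, A n k :=
          Summable.tsum_le_tsum (fun n => hGle (k, n)) (hsec k) (hAsum k)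
      _ = chaosDom C k := htsumA k
  have hGsum : Summable G := by
    rw [summable_prod_of_nonneg hG0]
    refine ⟨hsec, ?_⟩
    apply Summable.of_nonneg_of_le
      (fun k => tsum_nonneg fun n => hG0 (k, n)) htsum (summable_chaosDom C)
  have hFsum : Summable fun p : ℕ × ℕ => G p.swap := hGsum.prod_symm
  have hF0 : (0 : ℕ × ℕ → ℝ) ≤ fun p : ℕ × ℕ => G p.swap := fun p => hG0 p.swap
  have hg : Summable fun n => ∑' k, G (Prod.swap (n, k)) :=
    ((summable_prod_of_nonneg hF0).mp hFsum).2
  have hgval : ∀ n : ℕ, (∑' k, G (Prod.swap (n, k))) = ∑ k ∈ Finset.Icc 1 n, A n k := by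
    intro n
    have : ∀ k ∉ Finset.Icc 1 n, G (Prod.swap (n, k)) = 0 := by
      intro k hk
      simp only [hG, Prod.swap]
      exact if_neg hk
    rw [tsum_eq_sum this]
    apply Finset.sum_congr rfl
    intro k hk
    simp only [hG, Prod.swap]
    exact if_pos hk
  apply Summable.of_norm_bounded hg
  intro n
  rw [hgval n]
  calc ‖∑ k ∈ Finset.Icc 1 n,
        (C ^ n / (n.factorial : ℝ)) * (4 * ((k : ℝ) + 3)) ^ (((k : ℝ) + 3) / 2) *
          stirlingSecond n k‖
      ≤ ∑ k ∈ Finset.Icc 1 n,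
        |(C ^ n / (n.factorial : ℝ)) * (4 * ((k : ℝ) + 3)) ^ (((k : ℝ) + 3) / 2) *
          stirlingSecond n k| := Finset.abs_sum_le_sum_abs _ _
    _ ≤ ∑ k ∈ Finset.Icc 1 n, A n k := by
        apply Finset.sum_le_sum
        intro k _
        have hFn : (0:ℝ) < (n.factorial : ℝ) := by exact_mod_cast n.factorial_pos
        have hwnn : 0 ≤ chaosWgt k := chaosWgt_nonneg k
        have hc : (0:ℝ) ≤ C ^ n / (n.factorial : ℝ) := by positivity
        have hch : (4 * ((k : ℝ) + 3)) ^ (((k : ℝ) + 3) / 2) = chaosWgt k := rfl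
        rw [abs_mul, abs_mul, abs_of_nonneg hc, hch, abs_of_nonneg hwnn]
        calc C ^ n / (n.factorial : ℝ) * chaosWgt k * |stirlingSecond n k|
            ≤ C ^ n / (n.factorial : ℝ) * chaosWgt k *
              (2 ^ k * (k : ℝ) ^ n / (k.factorial : ℝ)) := by
              apply mul_le_mul_of_nonneg_left (abs_stirlingSecond_le n k)
              positivity
          _ = A n k := by
              simp only [hA, mul_pow]
              ring
end
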